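/- Let h(t) = ∫_0^t cos(s)/√(t-s) ds and H_c(t) = ∫_0^t h(s) cos(s) ds. Then H_c(t) = (1/4)·{√(2π)·C(√(2/π)√t)·(2t + sin 2t) − √(2π)·S(√(2/π)√t)·cos 2t − 2√t sin t} for all t ≥ 0. -/

import Mathlib

open Real MeasureTheory intervalIntegral

/-- The Fresnel cosine integral `C(z) = ∫_0^z cos(π s²/2) ds`. -/
noncomputable def fresnelC (z : ℝ) : ℝ := ∫ s in (0:ℝ)..z, Real.cos (π * s ^ 2 / 2)

/-- The Fresnel sine integral `S(z) = ∫_0^z sin(π s²/2) ds`. -/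
noncomputable def fresnelS (z : ℝ) : ℝ := ∫ s in (0:ℝ)..z, Real.sin (π * s ^ 2 / 2)

/-- The Abel transform of `cos`: `h(t) = ∫_0^t cos s/√(t-s) ds`. -/
noncomputable def abelCos (t : ℝ) : ℝ := ∫ s in (0:ℝ)..t, Real.cos s / Real.sqrt (t - s)

open Filter Topology in

lemma cont_fc : Continuous fun s : ℝ => Real.cos (π * s ^ 2 / 2) := by fun_prop

lemma G_intable (t : ℝ) (ht : 0 ≤ t) :
    IntervalIntegrable (fun v => Real.cos (t - v) / Real.sqrt v) volume 0 t := by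
  have h1 : IntervalIntegrable (fun v : ℝ => v ^ (-(1/2) : ℝ)) volume 0 t :=
    intervalIntegral.intervalIntegrable_rpow' (by norm_num)
  apply h1.mono_fun
  · exact ((Real.measurable_cos.comp (measurable_const.sub measurable_id)).div
      Real.continuous_sqrt.measurable).aestronglyMeasurable
  · filter_upwards [ae_restrict_mem measurableSet_uIoc] with v hv
    rw [Set.uIoc_of_le ht] at hv
    have hv0 : 0 < v := hv.1
    have hs : Real.sqrt v = v ^ ((1:ℝ)/2) := Real.sqrt_eq_rpow v
    rw [Real.norm_eq_abs, Real.norm_eq_abs, abs_of_nonneg (Real.rpow_nonneg hv0.le _),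
      Real.rpow_neg hv0.le, ← hs, abs_div, abs_of_nonneg (Real.sqrt_nonneg v),
      div_eq_mul_inv]
    calc |Real.cos (t - v)| * (Real.sqrt v)⁻¹ ≤ 1 * (Real.sqrt v)⁻¹ := by
          gcongr; exact Real.abs_cos_le_one _
      _ = (Real.sqrt v)⁻¹ := one_mul _

open Filter Topology in

lemma sub_lemma (t ε : ℝ) (hε : 0 < ε) (hεt : ε ≤ t) :
    (∫ v in ε..t, Real.cos (t - v) / Real.sqrt v)
      = ∫ u in Real.sqrt (2 * ε / π)..Real.sqrt (2 * t / π),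
          Real.sqrt (2 * π) * Real.cos (t - π * u ^ 2 / 2) := by
  have ht0 : 0 < t := lt_of_lt_of_le hε hεt
  set a := Real.sqrt (2 * ε / π)
  set b := Real.sqrt (2 * t / π)
  have hπ : (0:ℝ) < π := Real.pi_pos
  have ha : 0 < a := Real.sqrt_pos.2 (by positivity)
  have hab : a ≤ b := Real.sqrt_le_sqrt (by gcongr)
  have hfa : π * a ^ 2 / 2 = ε := by
    rw [Real.sq_sqrt (by positivity)]; field_simp
  have hfb : π * b ^ 2 / 2 = t := by
    rw [Real.sq_sqrt (by positivity)]; field_simp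
  have key : (∫ u in a..b, (π * u) • ((fun v => Real.cos (t - v) / Real.sqrt v) ∘
        (fun u => π * u ^ 2 / 2)) u)
      = ∫ v in (π * a ^ 2 / 2)..(π * b ^ 2 / 2), Real.cos (t - v) / Real.sqrt v := by
    apply intervalIntegral.integral_comp_smul_deriv' (f := fun u => π * u ^ 2 / 2)
      (f' := fun u => π * u)
    · intro x _
      have h := ((hasDerivAt_pow 2 x).const_mul π).div_const 2
      exact h.congr_deriv (by push_cast; ring)
    · fun_prop
    · apply ContinuousOn.mono (s := {v : ℝ | ε ≤ v})
      · apply ContinuousOn.div (by fun_prop) (by fun_prop)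
        intro v hv
        exact (Real.sqrt_pos.2 (lt_of_lt_of_le hε hv)).ne'
      · rintro v ⟨u, hu, rfl⟩
        rw [Set.uIcc_of_le hab] at hu
        simp only [Set.mem_setOf_eq]
        rw [← hfa]
        have h1 : a ^ 2 ≤ u ^ 2 := pow_le_pow_left₀ ha.le hu.1 2
        nlinarith [h1, hπ]
  rw [hfa, hfb] at key
  rw [← key]
  apply intervalIntegral.integral_congr
  intro u hu
  rw [Set.uIcc_of_le hab] at hu
  have hu0 : 0 < u := lt_of_lt_of_le ha hu.1
  have hsq : Real.sqrt (π * u ^ 2 / 2) = u * Real.sqrt (π / 2) := by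
    rw [show π * u ^ 2 / 2 = u ^ 2 * (π / 2) by ring, Real.sqrt_mul (by positivity),
      Real.sqrt_sq hu0.le]
  have hmul : Real.sqrt (2 * π) * Real.sqrt (π / 2) = π := by
    rw [← Real.sqrt_mul (by positivity), show 2 * π * (π / 2) = π ^ 2 by ring,
      Real.sqrt_sq hπ.le]
  have hs2 : (0:ℝ) < Real.sqrt (π / 2) := Real.sqrt_pos.2 (by positivity)
  simp only [Function.comp, smul_eq_mul, hsq]
  have e1 : π * u * (Real.cos (t - π * u ^ 2 / 2) / (u * Real.sqrt (π / 2)))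
      = (π * u * Real.cos (t - π * u ^ 2 / 2)) / (u * Real.sqrt (π / 2)) := by ring
  rw [e1, div_eq_iff (by positivity)]
  linear_combination (-u) * Real.cos (t - π * u ^ 2 / 2) * hmul

open Filter Topology

lemma fresnelC_hasDerivAt (z : ℝ) : HasDerivAt fresnelC (Real.cos (π * z ^ 2 / 2)) z := by
  have hc : Continuous fun s : ℝ => Real.cos (π * s ^ 2 / 2) := by fun_prop
  exact intervalIntegral.integral_hasDerivAt_right (hc.intervalIntegrable _ _)
    hc.stronglyMeasurable.stronglyMeasurableAtFilter hc.continuousAt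

lemma fresnelS_hasDerivAt (z : ℝ) : HasDerivAt fresnelS (Real.sin (π * z ^ 2 / 2)) z := by
  have hc : Continuous fun s : ℝ => Real.sin (π * s ^ 2 / 2) := by fun_prop
  exact intervalIntegral.integral_hasDerivAt_right (hc.intervalIntegrable _ _)
    hc.stronglyMeasurable.stronglyMeasurableAtFilter hc.continuousAt

lemma fresnelC_continuous : Continuous fresnelC := by
  have hc : Continuous fun s : ℝ => Real.cos (π * s ^ 2 / 2) := by fun_prop
  exact intervalIntegral.continuous_primitive (fun a b => hc.intervalIntegrable a b) 0

lemma fresnelS_continuous : Continuous fresnelS := by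
  have hc : Continuous fun s : ℝ => Real.sin (π * s ^ 2 / 2) := by fun_prop
  exact intervalIntegral.continuous_primitive (fun a b => hc.intervalIntegrable a b) 0

-- derivative of x ↦ fresnelC (√(2/π) * √x) at x > 0 is cos x * (√(2/π)/(2 √x))
lemma comp_deriv (x : ℝ) (hx : 0 < x) :
    HasDerivAt (fun y => fresnelC (Real.sqrt (2 / π) * Real.sqrt y))
      (Real.cos x * (Real.sqrt (2 / π) / (2 * Real.sqrt x))) x := by
  have hin : HasDerivAt (fun y : ℝ => Real.sqrt (2 / π) * Real.sqrt y)
      (Real.sqrt (2 / π) * (1 / (2 * Real.sqrt x))) x :=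
    (Real.hasDerivAt_sqrt hx.ne').const_mul _
  have harg : π * (Real.sqrt (2 / π) * Real.sqrt x) ^ 2 / 2 = x := by
    rw [mul_pow, Real.sq_sqrt (by positivity : (0:ℝ) ≤ 2 / π), Real.sq_sqrt hx.le]
    field_simp
  have := (fresnelC_hasDerivAt (Real.sqrt (2 / π) * Real.sqrt x)).comp x hin
  rw [harg] at this
  exact this.congr_deriv (by ring)


lemma abelCos_eq (t : ℝ) (ht : 0 ≤ t) :
    abelCos t = Real.sqrt (2 * π) * (fresnelC (Real.sqrt (2 / π) * Real.sqrt t) * Real.cos t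
      + fresnelS (Real.sqrt (2 / π) * Real.sqrt t) * Real.sin t) := by
  have hπ : (0:ℝ) < π := Real.pi_pos
  rcases eq_or_lt_of_le ht with rfl | ht0
  · simp [abelCos, fresnelC, fresnelS]
  set G : ℝ → ℝ := fun v => Real.cos (t - v) / Real.sqrt v with hG
  -- step 0 : abelCos t = ∫_0^t G
  have h0 : abelCos t = ∫ v in (0:ℝ)..t, G v := by
    rw [abelCos]
    have := intervalIntegral.integral_comp_sub_left G t (a := 0) (b := t)
    simp only [sub_self, sub_zero] at this
    rw [← this]
    apply intervalIntegral.integral_congr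
    intro s _
    simp only [hG, sub_sub_cancel]
  set z0 := Real.sqrt (2 * t / π) with hz0
  have hz : Real.sqrt (2 / π) * Real.sqrt t = z0 := by
    rw [hz0, ← Real.sqrt_mul (by positivity)]
    congr 1; ring
  have hIG := G_intable t ht
  -- Φ tendsto
  have hsplit : ∀ ε ∈ Set.Icc (0:ℝ) t, (∫ v in ε..t, G v) = (∫ v in (0:ℝ)..t, G v) - ∫ v in (0:ℝ)..ε, G v := by
    intro ε hε
    exact (intervalIntegral.integral_interval_sub_left hIG
      (hIG.mono_set (by rw [Set.uIcc_of_le hε.1, Set.uIcc_of_le ht]; exact Set.Icc_subset_Icc le_rfl hε.2))).symm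
  have hPcont : ContinuousOn (fun x => ∫ v in (0:ℝ)..x, G v) (Set.Icc 0 t) := by
    have := intervalIntegral.continuousOn_primitive_interval (f := G) (μ := volume) (a := 0) (b := t) ?_
    · rwa [Set.uIcc_of_le ht] at this
    · rw [Set.uIcc_of_le ht]
      exact (intervalIntegrable_iff_integrableOn_Icc_of_le ht).mp hIG
  have hmemIoc : Set.Ioc (0:ℝ) t ∈ 𝓝[>] (0:ℝ) := by
    exact Ioc_mem_nhdsGT_of_mem ⟨le_rfl, ht0⟩
  have hle : 𝓝[>] (0:ℝ) ≤ 𝓝[Set.Icc 0 t] (0:ℝ) := by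
    exact nhdsWithin_le_of_mem (Filter.mem_of_superset hmemIoc Set.Ioc_subset_Icc_self)
  have hΦ : Tendsto (fun ε => ∫ v in ε..t, G v) (𝓝[>] (0:ℝ)) (𝓝 (∫ v in (0:ℝ)..t, G v)) := by
    have hP0 : Tendsto (fun x => ∫ v in (0:ℝ)..x, G v) (𝓝[>] (0:ℝ)) (𝓝 0) := by
      have := (hPcont 0 (Set.mem_Icc.2 ⟨le_rfl, ht⟩))
      have h2 := this.tendsto
      simp only [intervalIntegral.integral_same] at h2
      exact h2.mono_left hle
    have h3 : Tendsto (fun ε : ℝ => (∫ v in (0:ℝ)..t, G v) - ∫ v in (0:ℝ)..ε, G v)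
        (𝓝[>] (0:ℝ)) (𝓝 ((∫ v in (0:ℝ)..t, G v) - 0)) := tendsto_const_nhds.sub hP0
    rw [sub_zero] at h3
    apply h3.congr'
    filter_upwards [hmemIoc] with ε hε
    exact (hsplit ε ⟨hε.1.le, hε.2⟩).symm
  -- Ψ tendsto
  set k : ℝ → ℝ := fun u => Real.sqrt (2 * π) * Real.cos (t - π * u ^ 2 / 2) with hk
  have hkc : Continuous k := by fun_prop
  have hQ : ∀ y, (∫ u in y..z0, k u) = (∫ u in (0:ℝ)..z0, k u) - ∫ u in (0:ℝ)..y, k u :=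
    fun y => (intervalIntegral.integral_interval_sub_left (hkc.intervalIntegrable _ _)
      (hkc.intervalIntegrable _ _)).symm
  have hQcont : Continuous fun y => ∫ u in y..z0, k u := by
    have heq : (fun y => ∫ u in y..z0, k u)
        = fun y => (∫ u in (0:ℝ)..z0, k u) - ∫ u in (0:ℝ)..y, k u := funext hQ
    rw [heq]
    exact continuous_const.sub (intervalIntegral.continuous_primitive
      (fun a b => hkc.intervalIntegrable a b) 0)
  have hccomp : Tendsto (fun ε : ℝ => Real.sqrt (2 * ε / π)) (𝓝[>] (0:ℝ)) (𝓝 0) := by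
    have : Continuous fun ε : ℝ => Real.sqrt (2 * ε / π) := by fun_prop
    have h2 : Tendsto (fun ε : ℝ => Real.sqrt (2 * ε / π)) (𝓝[>] (0:ℝ))
        (𝓝 (Real.sqrt (2 * 0 / π))) := (this.tendsto 0).mono_left nhdsWithin_le_nhds
    simpa using h2
  have hΨ : Tendsto (fun ε => ∫ u in Real.sqrt (2 * ε / π)..z0, k u) (𝓝[>] (0:ℝ))
      (𝓝 (∫ u in (0:ℝ)..z0, k u)) := by
    have := (hQcont.tendsto 0).comp hccomp
    simpa [Function.comp_def] using this
  have key : (∫ v in (0:ℝ)..t, G v) = ∫ u in (0:ℝ)..z0, k u := by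
    apply tendsto_nhds_unique (l := 𝓝[>] (0:ℝ)) ?_ hΨ
    apply hΦ.congr'
    filter_upwards [hmemIoc] with ε hε
    exact sub_lemma t ε hε.1 hε.2
  -- expand
  rw [h0, key, hz]
  rw [hk]
  simp only
  rw [intervalIntegral.integral_const_mul]
  congr 1
  have hcs : ∀ u : ℝ, Real.cos (t - π * u ^ 2 / 2)
      = Real.cos (π * u ^ 2 / 2) * Real.cos t + Real.sin (π * u ^ 2 / 2) * Real.sin t := by
    intro u; rw [Real.cos_sub]; ring
  simp_rw [hcs]
  rw [intervalIntegral.integral_add (((by fun_prop : Continuous fun u : ℝ => Real.cos (π * u ^ 2 / 2) * Real.cos t)).intervalIntegrable _ _)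
    (((by fun_prop : Continuous fun u : ℝ => Real.sin (π * u ^ 2 / 2) * Real.sin t)).intervalIntegrable _ _),
    intervalIntegral.integral_mul_const, intervalIntegral.integral_mul_const]
  rw [fresnelC, fresnelS]

lemma argsq (x : ℝ) (hx : 0 ≤ x) : π * (Real.sqrt (2 / π) * Real.sqrt x) ^ 2 / 2 = x := by
  rw [mul_pow, Real.sq_sqrt (by positivity : (0:ℝ) ≤ 2 / π), Real.sq_sqrt hx]
  field_simp

/-- closed form for `H_c(t) = ∫_0^t h(s) cos s ds`. -/
theorem Hc_closed_form (t : ℝ) (ht : 0 ≤ t) :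
    (∫ s in (0:ℝ)..t, abelCos s * Real.cos s)
      = (1/4) * (Real.sqrt (2 * π) * fresnelC (Real.sqrt (2 / π) * Real.sqrt t)
            * (2 * t + Real.sin (2 * t))
          - Real.sqrt (2 * π) * fresnelS (Real.sqrt (2 / π) * Real.sqrt t)
            * Real.cos (2 * t)
          - 2 * Real.sqrt t * Real.sin t) := by
  have hπ : (0:ℝ) < π := Real.pi_pos
  set c := Real.sqrt (2 * π) with hc
  have hc0 : 0 < c := Real.sqrt_pos.2 (by positivity)
  have hcw : c * Real.sqrt (2 / π) = 2 := by
    rw [hc, ← Real.sqrt_mul (by positivity)]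
    rw [show 2 * π * (2 / π) = 4 by field_simp; ring]
    rw [show (4:ℝ) = 2 ^ 2 by norm_num, Real.sqrt_sq (by norm_num)]
  have hw : Real.sqrt (2 / π) = 2 / c := by
    rw [eq_div_iff hc0.ne']; linarith [hcw]
  set g : ℝ → ℝ := fun s => c * (fresnelC (Real.sqrt (2 / π) * Real.sqrt s) * Real.cos s
      + fresnelS (Real.sqrt (2 / π) * Real.sqrt s) * Real.sin s) * Real.cos s with hg
  set R : ℝ → ℝ := fun x => (1/4) * (c * fresnelC (Real.sqrt (2 / π) * Real.sqrt x)
            * (2 * x + Real.sin (2 * x))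
          - c * fresnelS (Real.sqrt (2 / π) * Real.sqrt x) * (Real.cos (2 * x))
          - 2 * Real.sqrt x * Real.sin x) with hR
  have hgc : Continuous g := by
    apply Continuous.mul ?_ Real.continuous_cos
    apply Continuous.mul continuous_const
    exact ((fresnelC_continuous.comp (by fun_prop)).mul Real.continuous_cos).add
      ((fresnelS_continuous.comp (by fun_prop)).mul Real.continuous_sin)
  have hRc : Continuous R := by
    apply Continuous.mul continuous_const
    apply Continuous.sub
    apply Continuous.sub
    · exact ((continuous_const.mul (fresnelC_continuous.comp (by fun_prop))).mul (by fun_prop))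
    · exact ((continuous_const.mul (fresnelS_continuous.comp (by fun_prop))).mul (by fun_prop))
    · fun_prop
  have step1 : (∫ s in (0:ℝ)..t, abelCos s * Real.cos s) = ∫ s in (0:ℝ)..t, g s := by
    apply intervalIntegral.integral_congr
    intro s hs
    rw [Set.uIcc_of_le ht] at hs
    simp only [hg]
    rw [abelCos_eq s hs.1, hc]
  have step2 : (∫ s in (0:ℝ)..t, g s) = R t - R 0 := by
    apply intervalIntegral.integral_eq_sub_of_hasDeriv_right_of_le ht
      hRc.continuousOn ?_ (hgc.intervalIntegrable _ _)
    intro x hx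
    have hx0 : 0 < x := hx.1
    have hu : Real.sqrt x * Real.sqrt x = x := Real.mul_self_sqrt hx0.le
    have hu0 : 0 < Real.sqrt x := Real.sqrt_pos.2 hx0
    -- pieces
    have hin : HasDerivAt (fun y : ℝ => Real.sqrt (2 / π) * Real.sqrt y)
        (Real.sqrt (2 / π) * (1 / (2 * Real.sqrt x))) x :=
      (Real.hasDerivAt_sqrt hx0.ne').const_mul _
    have hC : HasDerivAt (fun y => fresnelC (Real.sqrt (2 / π) * Real.sqrt y))
        (Real.cos x * (Real.sqrt (2 / π) * (1 / (2 * Real.sqrt x)))) x := by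
      have h2 := (fresnelC_hasDerivAt (Real.sqrt (2 / π) * Real.sqrt x)).comp x hin
      rw [argsq x hx0.le] at h2
      exact h2
    have hS : HasDerivAt (fun y => fresnelS (Real.sqrt (2 / π) * Real.sqrt y))
        (Real.sin x * (Real.sqrt (2 / π) * (1 / (2 * Real.sqrt x)))) x := by
      have h2 := (fresnelS_hasDerivAt (Real.sqrt (2 / π) * Real.sqrt x)).comp x hin
      rw [argsq x hx0.le] at h2
      exact h2
    have h2x : HasDerivAt (fun y : ℝ => 2 * y) 2 x := by
      simpa using (hasDerivAt_id x).const_mul (2:ℝ)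
    have hA : HasDerivAt (fun y : ℝ => 2 * y + Real.sin (2 * y))
        (2 + Real.cos (2 * x) * 2) x := h2x.add h2x.sin
    have hB : HasDerivAt (fun y : ℝ => Real.cos (2 * y)) (-Real.sin (2 * x) * 2) x := h2x.cos
    have hsq : HasDerivAt (fun y : ℝ => 2 * Real.sqrt y * Real.sin y)
        (2 * (1 / (2 * Real.sqrt x)) * Real.sin x + 2 * Real.sqrt x * Real.cos x) x :=
      ((Real.hasDerivAt_sqrt hx0.ne').const_mul 2).mul (Real.hasDerivAt_sin x)
    have hD : HasDerivAt R ((1/4) * ((c * (Real.cos x * (Real.sqrt (2 / π) * (1 / (2 * Real.sqrt x)))) * (2 * x + Real.sin (2 * x)) + c * fresnelC (Real.sqrt (2 / π) * Real.sqrt x) * (2 + Real.cos (2 * x) * 2))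
        - (c * (Real.sin x * (Real.sqrt (2 / π) * (1 / (2 * Real.sqrt x)))) * Real.cos (2 * x) + c * fresnelS (Real.sqrt (2 / π) * Real.sqrt x) * (-Real.sin (2 * x) * 2))
        - (2 * (1 / (2 * Real.sqrt x)) * Real.sin x + 2 * Real.sqrt x * Real.cos x))) x := by
      apply HasDerivAt.const_mul
      apply HasDerivAt.sub
      apply HasDerivAt.sub
      · exact ((hC.const_mul c).mul hA).congr_deriv (by ring)
      · exact ((hS.const_mul c).mul hB).congr_deriv (by ring)
      · exact hsq
    have heq : ((1/4) * ((c * (Real.cos x * (Real.sqrt (2 / π) * (1 / (2 * Real.sqrt x)))) * (2 * x + Real.sin (2 * x)) + c * fresnelC (Real.sqrt (2 / π) * Real.sqrt x) * (2 + Real.cos (2 * x) * 2))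
        - (c * (Real.sin x * (Real.sqrt (2 / π) * (1 / (2 * Real.sqrt x)))) * Real.cos (2 * x) + c * fresnelS (Real.sqrt (2 / π) * Real.sqrt x) * (-Real.sin (2 * x) * 2))
        - (2 * (1 / (2 * Real.sqrt x)) * Real.sin x + 2 * Real.sqrt x * Real.cos x))) = g x := by
      rw [hg]
      simp only
      rw [Real.sin_two_mul, Real.cos_two_mul, hw]
      set A := fresnelC (Real.sqrt (2 / π) * Real.sqrt x)
      set B := fresnelS (Real.sqrt (2 / π) * Real.sqrt x)
      field_simp
      linear_combination (-2 * Real.cos x) * hu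
    rw [heq] at hD
    exact hD.hasDerivWithinAt
  have hR0 : R 0 = 0 := by
    rw [hR]
    simp [fresnelC, fresnelS]
  rw [step1, step2, hR0, sub_zero, hR]
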